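/- Let Δ(2,3,n) = ⟨α, u, v | α^n = u^3 = v^2 = αuv = 1⟩ be the (2,3,n) triangle group with n = 2k+1 odd. The subgroup generated by a = α², b = vα²v, c = uα²u² equals the whole group Δ(2,3,n); explicitly α = a^{k+1}, v = a^k b^k a^k, and u = a^{-1} b^k a^k. -/

import Mathlib

/-- Relations of the `(n,3,2)` von Dyck triangle group
`⟨α, u, v | αⁿ = u³ = v² = αuv = 1⟩` on generators `α = 0`, `u = 1`, `v = 2`. -/
def triangle23Rels (n : ℕ) : Set (FreeGroup (Fin 3)) :=
  {FreeGroup.of 0 ^ n, FreeGroup.of 1 ^ 3, FreeGroup.of 2 ^ 2,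
    FreeGroup.of 0 * FreeGroup.of 1 * FreeGroup.of 2}

/-- The `(2,3,n)` triangle group for odd `n = 2k+1`. -/
abbrev Triangle23 (k : ℕ) := PresentedGroup (triangle23Rels (2 * k + 1))

lemma triangle23_rel_eq_one {n : ℕ} {r : FreeGroup (Fin 3)}
    (hr : r ∈ triangle23Rels n) : PresentedGroup.mk (triangle23Rels n) r = 1 :=
  (QuotientGroup.eq_one_iff r).mpr (Subgroup.subset_normalClosure hr)

lemma conj_pow_group {G : Type*} [Group G] (v x : G) (k : ℕ) :
    (v * x * v⁻¹) ^ k = v * x ^ k * v⁻¹ := by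
  induction k with
  | zero => simp
  | succ n ih => rw [pow_succ, pow_succ, ih]; group

/-- In `Δ(2,3,n)` with `n = 2k+1` odd, the subgroup generated by `a = α²`,
`b = vα²v`, `c = uα²u²` is the whole group; explicitly `α = a^{k+1}`,
`v = aᵏbᵏaᵏ` and `u = a⁻¹bᵏaᵏ`. -/
theorem triangle23_generated_by_squares (k : ℕ) (hk : 1 ≤ k)
    (α u v a b c : Triangle23 k)
    (hα : α = PresentedGroup.of 0) (hu : u = PresentedGroup.of 1)
    (hv : v = PresentedGroup.of 2)
    (ha : a = α ^ 2) (hb : b = v * α ^ 2 * v) (hc : c = u * α ^ 2 * u ^ 2) :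
    α = a ^ (k + 1) ∧ v = a ^ k * b ^ k * a ^ k ∧ u = a⁻¹ * b ^ k * a ^ k ∧
    Subgroup.closure {a, b, c} = (⊤ : Subgroup (Triangle23 k)) := by
  -- the four relations
  have hαn : α ^ (2 * k + 1) = 1 := by
    have := triangle23_rel_eq_one (n := 2 * k + 1)
      (r := FreeGroup.of 0 ^ (2 * k + 1)) (by left; rfl)
    simpa [map_pow, hα, PresentedGroup.of] using this
  have hu3 : u ^ 3 = 1 := by
    have := triangle23_rel_eq_one (n := 2 * k + 1)
      (r := FreeGroup.of 1 ^ 3) (by right; left; rfl)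
    simpa [map_pow, hu, PresentedGroup.of] using this
  have hv2 : v ^ 2 = 1 := by
    have := triangle23_rel_eq_one (n := 2 * k + 1)
      (r := FreeGroup.of 2 ^ 2) (by right; right; left; rfl)
    simpa [map_pow, hv, PresentedGroup.of] using this
  have hαuv : α * u * v = 1 := by
    have := triangle23_rel_eq_one (n := 2 * k + 1)
      (r := FreeGroup.of 0 * FreeGroup.of 1 * FreeGroup.of 2) (by right; right; right; rfl)
    simpa [map_mul, hα, hu, hv, PresentedGroup.of] using this
  -- consequences
  have hvinv : v⁻¹ = v := by
    rw [pow_two] at hv2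
    exact inv_eq_of_mul_eq_one_left hv2
  have huv : u = α⁻¹ * v := by
    have h1 : u * v = α⁻¹ := by
      rw [eq_inv_iff_mul_eq_one]
      calc u * v * α = α⁻¹ * (α * u * v) * α := by group
        _ = 1 := by rw [hαuv]; group
    calc u = (u * v) * v⁻¹ := by group
      _ = α⁻¹ * v := by rw [h1, hvinv]
  have hak : a ^ k = α⁻¹ := by
    rw [ha, ← pow_mul]
    rw [eq_inv_iff_mul_eq_one, ← pow_succ]
    exact hαn
  have g1 : α = a ^ (k + 1) := by
    rw [pow_succ, hak, ha]; group
  have hbk : b ^ k = v * α⁻¹ * v := by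
    have hb' : b = v * α ^ 2 * v⁻¹ := by rw [hvinv, hb]
    have h2k : α ^ (2 * k) = α⁻¹ := by rw [← hak, ha, ← pow_mul]
    rw [hb', conj_pow_group, ← pow_mul, hvinv, h2k]
  have hu2 : u ^ 2 = v * α := by
    have : u ^ 2 = u⁻¹ := by
      rw [eq_inv_iff_mul_eq_one, ← pow_succ]; exact hu3
    rw [this, huv]
    rw [mul_inv_rev, hvinv, inv_inv]
  have g2 : v = a ^ k * b ^ k * a ^ k := by
    rw [hak, hbk]
    calc v = (v * α) * α⁻¹ := by group
      _ = u ^ 2 * α⁻¹ := by rw [hu2]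
      _ = (α⁻¹ * v) * (α⁻¹ * v) * α⁻¹ := by rw [pow_two, ← huv]
      _ = α⁻¹ * (v * α⁻¹ * v) * α⁻¹ := by group
  have g3 : u = a⁻¹ * b ^ k * a ^ k := by
    rw [hak, hbk, ha]
    calc u = α⁻¹ * (v * α) * α⁻¹ := by rw [huv]; group
      _ = α⁻¹ * u ^ 2 * α⁻¹ := by rw [hu2]
      _ = α⁻¹ * ((α⁻¹ * v) * (α⁻¹ * v)) * α⁻¹ := by rw [pow_two, ← huv]
      _ = (α ^ 2)⁻¹ * (v * α⁻¹ * v) * α⁻¹ := by group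
  refine ⟨g1, g2, g3, ?_⟩
  rw [eq_top_iff]
  intro x _
  refine PresentedGroup.generated_by _ _ (fun j => ?_) x
  have hamem : a ∈ Subgroup.closure {a, b, c} := Subgroup.subset_closure (by simp)
  have hbmem : b ∈ Subgroup.closure {a, b, c} := Subgroup.subset_closure (by simp)
  have hαmem : α ∈ Subgroup.closure {a, b, c} := g1 ▸ pow_mem hamem _
  have hvmem : v ∈ Subgroup.closure {a, b, c} :=
    g2 ▸ mul_mem (mul_mem (pow_mem hamem _) (pow_mem hbmem _)) (pow_mem hamem _)
  have humem : u ∈ Subgroup.closure {a, b, c} :=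
    g3 ▸ mul_mem (mul_mem (inv_mem hamem) (pow_mem hbmem _)) (pow_mem hamem _)
  fin_cases j
  · exact hα ▸ hαmem
  · exact hu ▸ humem
  · exact hv ▸ hvmem
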